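/- arXiv:2309.02756 — 7 statements merged into one kernel-verified Lean document; each statement's English description precedes it below -/
import Mathlib

section
/- Given a PES E = (E, <, #, l, ∅) and any subset F ⊆ E, the structure φ(E, F) = (E, <, #, l, F, ≺, ▷, ∅), where e ≺ e̲ for each e ∈ F, and e ▷ e̲' for all e ∈ E and e' ∈ F with e' < e, is a causal (hence cause-respecting) RPES. -/
/-- Data of a (labeled) reversible prime event structure (RPES) over actions `L`:
a carrier set of events, causality `lt`, conflict `conf`, labeling, a set `F` of
reversible events, reverse causality `rc` (`rc e u` means `e ≺ u̲`), prevention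
`prev` (`prev e u` means `e ▷ u̲`), and an initial configuration `C0`. -/
structure RPESData (E : Type) (L : Type) where
  carrier : Set E
  lt : E → E → Prop
  conf : E → E → Prop
  label : E → L
  F : Set E
  rc : E → E → Prop
  prev : E → E → Prop
  C0 : Set E

/-- Data of a (labeled) prime event structure (PES) with empty initial configuration. -/
structure PESData (E : Type) (L : Type) where
  carrier : Set E
  lt : E → E → Prop
  conf : E → E → Prop
  label : E → L

namespace RPESData

variable {E : Type} {L : Type}

/-- A set of events is conflict-free. -/
def ConflictFree (R : RPESData E L) (X : Set E) : Prop :=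
  ∀ e ∈ X, ∀ e' ∈ X, ¬ R.conf e e'

/-- Sustained causation: `a ≪ b` iff `a < b` and, if `a` is reversible, `b ▷ a̲`. -/
def SC (R : RPESData E L) (a b : E) : Prop :=
  R.lt a b ∧ (a ∈ R.F → R.prev b a)

/-- The axioms of a reversible prime event structure. -/
structure IsRPES (R : RPESData E L) : Prop where
  countable : R.carrier.Countable
  lt_carrier : ∀ a b, R.lt a b → a ∈ R.carrier ∧ b ∈ R.carrier
  conf_carrier : ∀ a b, R.conf a b → a ∈ R.carrier ∧ b ∈ R.carrier
  conf_irrefl : ∀ a, ¬ R.conf a a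
  conf_symm : ∀ a b, R.conf a b → R.conf b a
  lt_irrefl : ∀ a, ¬ R.lt a a
  lt_trans : ∀ a b c, R.lt a b → R.lt b c → R.lt a c
  causes_finite : ∀ e, {e' | R.lt e' e}.Finite
  causes_cf : ∀ e, R.ConflictFree {e' | R.lt e' e}
  F_carrier : R.F ⊆ R.carrier
  rc_carrier : ∀ a b, R.rc a b → a ∈ R.carrier ∧ b ∈ R.F
  rc_refl : ∀ u ∈ R.F, R.rc u u
  rcauses_finite : ∀ u ∈ R.F, {e | R.rc e u}.Finite
  rcauses_cf : ∀ u ∈ R.F, R.ConflictFree {e | R.rc e u}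
  prev_carrier : ∀ a b, R.prev a b → a ∈ R.carrier ∧ b ∈ R.F
  prev_rc_disjoint : ∀ a b, ¬ (R.prev a b ∧ R.rc a b)
  sc_trans : ∀ a b c, R.SC a b → R.SC b c → R.SC a c
  conf_hered_sc : ∀ a b c, R.conf a b → R.SC b c → R.conf a c
  C0_carrier : R.C0 ⊆ R.carrier
  C0_finite : R.C0.Finite
  C0_closed : ∀ e ∈ R.C0, ∀ e', R.lt e' e → e' ∈ R.C0
  C0_cf : R.ConflictFree R.C0

/-- A cause-respecting RPES: causality is sustained causation. -/
def CauseRespecting (R : RPESData E L) : Prop :=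
  ∀ a b, R.lt a b → R.SC a b

/-- A causal RPES. -/
def Causal (R : RPESData E L) : Prop :=
  (∀ e, ∀ u ∈ R.F, (R.rc e u ↔ e = u)) ∧
  (∀ e, ∀ u ∈ R.F, (R.prev e u ↔ R.lt u e))

/-- The mixed step `A ∪ B̲` is enabled at configuration `C`. -/
def Enabled (R : RPESData E L) (C A B : Set E) : Prop :=
  A.Finite ∧ B.Finite ∧ A ⊆ R.carrier ∧ B ⊆ R.F ∧
  A ∩ C = ∅ ∧ B ⊆ C ∧ R.ConflictFree (C ∪ A) ∧
  (∀ e ∈ A, ∀ e', R.lt e' e → e' ∈ C \ B) ∧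
  (∀ e ∈ B, ∀ e', R.rc e' e → e' ∈ C \ (B \ {e})) ∧
  (∀ e ∈ B, ∀ e', R.prev e' e → e' ∉ C ∪ A)

/-- `IsTraceFrom R C t C'`: the sequence of mixed steps `t` can be executed
starting at `C`, ending in `C'`. -/
def IsTraceFrom (R : RPESData E L) : Set E → List (Set E × Set E) → Set E → Prop
  | C, [], C' => C' = C
  | C, p :: t, C' => R.Enabled C p.1 p.2 ∧ R.IsTraceFrom ((C \ p.2) ∪ p.1) t C'

/-- `t` is a trace of `R` with `last(t) = C`. -/
def IsTraceTo (R : RPESData E L) (t : List (Set E × Set E)) (C : Set E) : Prop :=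
  R.IsTraceFrom R.C0 t C

/-- `t` is a trace of `R`. -/
def IsTrace (R : RPESData E L) (t : List (Set E × Set E)) : Prop :=
  ∃ C, R.IsTraceTo t C

/-- Reachable configurations: obtained from `C0` by mixed steps. -/
inductive ReachConf (R : RPESData E L) : Set E → Prop
  | init : ReachConf R R.C0
  | step : ∀ C A B, ReachConf R C → R.Enabled C A B → ReachConf R ((C \ B) ∪ A)

/-- Forwards reachable configurations: obtained from `C0` by forward steps only. -/
inductive FwdReachConf (R : RPESData E L) : Set E → Prop
  | init : FwdReachConf R R.C0
  | step : ∀ C A, FwdReachConf R C → R.Enabled C A ∅ → FwdReachConf R ((C \ ∅) ∪ A)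

/-- The one-step removal operator: the residual of `R` after the step `A ∪ B̲`. -/
def residStep (R : RPESData E L) (A B : Set E) : RPESData E L :=
  let At : Set E := (A \ R.F) ∪ {a | a ∈ R.F ∧ ∃ x ∈ A \ R.F, R.lt a x}
  let CA : Set E := {e | e ∈ R.carrier ∧ ∃ a ∈ At, R.conf e a}
  let E' : Set E := R.carrier \ (At ∪ CA)
  let F' : Set E := (R.F ∩ E') \
    ({e | e ∈ R.F ∧ ∃ a ∈ CA, R.rc a e} ∪ {e | e ∈ R.F ∧ ∃ a ∈ At, R.prev a e})
  { carrier := E'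
    lt := fun a b => R.lt a b ∧ a ∈ E' ∧ b ∈ E'
    conf := fun a b => R.conf a b ∧ a ∈ E' ∧ b ∈ E'
    label := R.label
    F := F'
    rc := fun a b => R.rc a b ∧ a ∈ E' ∧ b ∈ F'
    prev := fun a b => R.prev a b ∧ a ∈ E' ∧ b ∈ F'
    C0 := ((R.C0 \ B) ∪ A) ∩ E' }

/-- The residual `R \ t` of `R` after a trace `t`. -/
def resid (R : RPESData E L) (t : List (Set E × Set E)) : RPESData E L :=
  t.foldl (fun S p => S.residStep p.1 p.2) R

/-- The multiset (as a function `L → ℕ`) of action labels of the step `A ∪ B̲`. -/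
noncomputable def stepLabel (R : RPESData E L) (A B : Set E) : L → ℕ :=
  fun a => Nat.card {e : E // e ∈ A ∪ B ∧ R.label e = a}

/-- Forgetting the reversibility structure. -/
def toPES (R : RPESData E L) : PESData E L :=
  ⟨R.carrier, R.lt, R.conf, R.label⟩

end RPESData

namespace PESData

variable {E : Type} {L : Type}

/-- The axioms of a prime event structure. -/
structure IsPES (P : PESData E L) : Prop where
  countable : P.carrier.Countable
  lt_carrier : ∀ a b, P.lt a b → a ∈ P.carrier ∧ b ∈ P.carrier
  conf_carrier : ∀ a b, P.conf a b → a ∈ P.carrier ∧ b ∈ P.carrier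
  lt_irrefl : ∀ a, ¬ P.lt a a
  lt_trans : ∀ a b c, P.lt a b → P.lt b c → P.lt a c
  causes_finite : ∀ e, {e' | P.lt e' e}.Finite
  conf_irrefl : ∀ a, ¬ P.conf a a
  conf_symm : ∀ a b, P.conf a b → P.conf b a
  conf_hered : ∀ a b c, P.conf a b → P.lt b c → P.conf a c

/-- `φ(E, F)`: the RPES obtained from a PES by declaring the events in `F`
reversible, with `e ≺ e̲` for `e ∈ F` and `e ▷ e̲'` whenever `e' ∈ F`, `e' < e`. -/
def toRPES (P : PESData E L) (F : Set E) : RPESData E L :=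
  { carrier := P.carrier
    lt := P.lt
    conf := P.conf
    label := P.label
    F := F
    rc := fun e u => u ∈ F ∧ e = u
    prev := fun e u => u ∈ F ∧ P.lt u e
    C0 := ∅ }

end PESData

/-- A labeled transition system. -/
structure LTS (S : Type) (Λ : Type) where
  tr : S → Λ → S → Prop
  init : S

/-- Bisimulation between labeled transition systems. -/
def IsBisimulation {S S' Λ : Type} (T : LTS S Λ) (T' : LTS S' Λ)
    (Rl : S → S' → Prop) : Prop :=
  Rl T.init T'.init ∧
  (∀ s s', Rl s s' → ∀ M s₁, T.tr s M s₁ → ∃ s₁', T'.tr s' M s₁' ∧ Rl s₁ s₁') ∧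
  (∀ s s', Rl s s' → ∀ M s₁', T'.tr s' M s₁' → ∃ s₁, T.tr s M s₁ ∧ Rl s₁ s₁')

namespace RPESData

variable {E : Type} {L : Type}

/-- Transition relation of the configuration transition system `TC(R)`. -/
def confTr (R : RPESData E L) (C : Set E) (M : L → ℕ) (C' : Set E) : Prop :=
  R.ReachConf C ∧ ∃ A B, R.Enabled C A B ∧ C' = (C \ B) ∪ A ∧ M = R.stepLabel A B

/-- The configuration transition system `TC(R)`. -/
def TC (R : RPESData E L) : LTS (Set E) (L → ℕ) :=
  ⟨R.confTr, R.C0⟩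

/-- Transition relation between residuals: `F ⇀^M F'` iff `F' = F \ (A ∪ B̲)` for
a one-step trace `A ∪ B̲` of `F` with label multiset `M`. -/
def residTr (R' : RPESData E L) (M : L → ℕ) (R'' : RPESData E L) : Prop :=
  ∃ A B, R'.Enabled R'.C0 A B ∧ R'' = R'.residStep A B ∧ M = R'.stepLabel A B

/-- Residuals reachable from `R` via `residTr`. -/
inductive ReachRes (R : RPESData E L) : RPESData E L → Prop
  | init : ReachRes R R
  | step : ∀ R' M R'', ReachRes R R' → residTr R' M R'' → ReachRes R R''

/-- The residual transition system `TE(R)`. -/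
def TE (R : RPESData E L) : LTS (RPESData E L) (L → ℕ) :=
  ⟨residTr, R⟩

end RPESData

/-- For a PES `P` and any `F ⊆ E`, the structure `φ(P, F)` is a
causal (hence cause-respecting) RPES. -/
theorem pes_toRPES_causal {E L : Type} (P : PESData E L) (h : P.IsPES)
    (F : Set E) (hF : F ⊆ P.carrier) :
    (P.toRPES F).IsRPES ∧ (P.toRPES F).Causal ∧ (P.toRPES F).CauseRespecting := by
  have hcf : ∀ e, (P.toRPES F).ConflictFree {e' | P.lt e' e} := by
    intro e a ha b hb hab
    exact h.conf_irrefl e (h.conf_hered _ _ _ (h.conf_symm _ _ (h.conf_hered _ _ _ (h.conf_symm _ _ hab) ha)) hb)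
  refine ⟨⟨h.countable, h.lt_carrier, h.conf_carrier, h.conf_irrefl, h.conf_symm,
    h.lt_irrefl, h.lt_trans, h.causes_finite, hcf, hF, ?_, ?_, ?_, ?_, ?_, ?_, ?_, ?_,
    ?_, ?_, ?_, ?_⟩, ⟨?_, ?_⟩, ?_⟩
  · rintro a b ⟨hb, rfl⟩; exact ⟨hF hb, hb⟩
  · intro u hu; exact ⟨hu, rfl⟩
  · intro u hu
    have : {e | (P.toRPES F).rc e u} = {u} := by
      ext x; simp only [PESData.toRPES, Set.mem_setOf_eq, Set.mem_singleton_iff]; exact ⟨fun h => h.2, fun h => ⟨hu, h⟩⟩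
    rw [this]; exact Set.finite_singleton u
  · intro u hu a ha b hb hab
    rcases ha with ⟨_, ha⟩; rcases hb with ⟨_, hb⟩
    subst ha; subst hb
    exact h.conf_irrefl _ hab
  · rintro a b ⟨hb, hlt⟩; exact ⟨(h.lt_carrier _ _ hlt).2, hb⟩
  · rintro a b ⟨⟨hb, hlt⟩, _, rfl⟩; exact h.lt_irrefl a hlt
  · rintro a b c ⟨hab, _⟩ ⟨hbc, _⟩
    exact ⟨h.lt_trans _ _ _ hab hbc, fun ha => ⟨ha, h.lt_trans _ _ _ hab hbc⟩⟩
  · rintro a b c hab ⟨hbc, _⟩; exact h.conf_hered _ _ _ hab hbc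
  · exact Set.empty_subset _
  · exact Set.finite_empty
  · intro e he; exact absurd he (Set.notMem_empty e)
  · intro e he; exact absurd he (Set.notMem_empty e)
  · intro e u hu
    constructor
    · rintro ⟨_, rfl⟩; rfl
    · rintro rfl; exact ⟨hu, rfl⟩
  · intro e u hu
    constructor
    · rintro ⟨_, hlt⟩; exact hlt
    · intro hlt; exact ⟨hu, hlt⟩
  · intro a b hlt
    exact ⟨hlt, fun ha => ⟨ha, hlt⟩⟩
end

section
/- For any RPES E and traces t, t(A∪B̲) ∈ Traces(E): the step last(t) →^{A∪B̲} last(t(A∪B̲)) holds; conversely, for traces t, t' ∈ Traces(E), if last(t) →^{A∪B̲} last(t'), then t(A∪B̲) ∈ Traces(E) and last(t(A∪B̲)) = last(t'). -/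
private lemma trace_append_aux {E L : Type} (R : RPESData E L) (A B : Set E) :
    ∀ (t : List (Set E × Set E)) (C C' : Set E),
      R.IsTraceFrom C (t ++ [(A, B)]) C' ↔
        ∃ D, R.IsTraceFrom C t D ∧ R.Enabled D A B ∧ C' = (D \ B) ∪ A := by
  intro t
  induction t with
  | nil =>
    intro C C'
    constructor
    · rintro ⟨hE, hEq⟩
      exact ⟨C, rfl, hE, hEq⟩
    · rintro ⟨D, hD, hE, hEq⟩
      cases hD
      exact ⟨hE, hEq⟩
  | cons p t ih =>
    intro C C'
    constructor
    · rintro ⟨hE, ht⟩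
      obtain ⟨D, hD, hE', hEq⟩ := (ih _ _).1 ht
      exact ⟨D, ⟨hE, hD⟩, hE', hEq⟩
    · rintro ⟨D, ⟨hE, hD⟩, hE', hEq⟩
      exact ⟨hE, (ih _ _).2 ⟨D, hD, hE', hEq⟩⟩

private lemma trace_last_unique {E L : Type} (R : RPESData E L) :
    ∀ (t : List (Set E × Set E)) (C C1 C2 : Set E),
      R.IsTraceFrom C t C1 → R.IsTraceFrom C t C2 → C1 = C2 := by
  intro t
  induction t with
  | nil => intro C C1 C2 h1 h2; cases h1; cases h2; rfl
  | cons p t ih =>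
    rintro C C1 C2 ⟨_, h1⟩ ⟨_, h2⟩
    exact ih _ _ _ h1 h2

/-- If `t(A∪B̲)` is a trace then `last(t) →^{A∪B̲} last(t(A∪B̲))`;
conversely, if `last(t) →^{A∪B̲} last(t')` then `t(A∪B̲)` is a trace and
`last(t(A∪B̲)) = last(t')`. -/
theorem trace_extend_iff_step {E L : Type} (R : RPESData E L) (h : R.IsRPES) :
    (∀ t A B C C', R.IsTraceTo t C → R.IsTraceTo (t ++ [(A, B)]) C' →
      R.Enabled C A B ∧ C' = (C \ B) ∪ A) ∧
    (∀ t t' A B C C', R.IsTraceTo t C → R.IsTraceTo t' C' →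
      R.Enabled C A B → (C \ B) ∪ A = C' →
      R.IsTraceTo (t ++ [(A, B)]) C') := by
  constructor
  · intro t A B C C' ht ht'
    obtain ⟨D, hD, hE, hEq⟩ := (trace_append_aux R A B t R.C0 C').1 ht'
    have : D = C := trace_last_unique R t R.C0 D C hD ht
    subst this
    exact ⟨hE, hEq⟩
  · intro t t' A B C C' ht ht' hE hEq
    exact (trace_append_aux R A B t R.C0 C').2 ⟨C, ht, hE, hEq.symm⟩
end

section
/- In a cause-respecting RPES, every reachable configuration is left-closed under causality: if C ∈ Conf(E) and e ∈ C and e' < e, then e' ∈ C. -/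
/-- In a cause-respecting RPES, every reachable configuration is
left-closed under causality. -/
theorem reachable_leftClosed {E L : Type} (R : RPESData E L) (h : R.IsRPES)
    (hcr : R.CauseRespecting) (C : Set E) (hC : R.ReachConf C) :
    ∀ e ∈ C, ∀ e', R.lt e' e → e' ∈ C := by
  induction hC with
  | init => exact h.C0_closed
  | step C A B _ hen ih =>
    rintro e (⟨heC, heB⟩ | heA) e' hlt
    · have he' : e' ∈ C := ih e heC e' hlt
      have he'B : e' ∉ B := by
        intro hB
        exact hen.2.2.2.2.2.2.2.2.2 e' hB e ((hcr e' e hlt).2 (hen.2.2.2.1 hB)) (Or.inl heC)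
      exact Or.inl ⟨he', he'B⟩
    · exact Or.inl ((hen.2.2.2.2.2.2.2.1 e heA e' hlt : e' ∈ C \ B))
end

section
/- For a cause-respecting RPES E and any trace t, the residual E \ t is again a cause-respecting RPES (in particular, every prefix-wise residual E \ tᵢ is a cause-respecting RPES). -/
namespace RPESData

variable {E : Type} {L : Type}

/-- The set `Ã` of executed irreversible events together with their executed
reversible causes, for the step `A ∪ B̲`. -/
def Atk (S : RPESData E L) (A : Set E) : Set E :=
  (A \ S.F) ∪ {a | a ∈ S.F ∧ ∃ x ∈ A \ S.F, S.lt a x}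

/-- Events in conflict with `Ã`. -/
def CAk (S : RPESData E L) (A : Set E) : Set E :=
  {e | e ∈ S.carrier ∧ ∃ a ∈ S.Atk A, S.conf e a}

/-- The carrier of the residual. -/
def Ek (S : RPESData E L) (A : Set E) : Set E := S.carrier \ (S.Atk A ∪ S.CAk A)

/-- The reversible events of the residual. -/
def Fk (S : RPESData E L) (A : Set E) : Set E :=
  (S.F ∩ S.Ek A) \
    ({e | e ∈ S.F ∧ ∃ a ∈ S.CAk A, S.rc a e} ∪ {e | e ∈ S.F ∧ ∃ a ∈ S.Atk A, S.prev a e})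

lemma residStep_eq (S : RPESData E L) (A B : Set E) :
    S.residStep A B =
      { carrier := S.Ek A
        lt := fun a b => S.lt a b ∧ a ∈ S.Ek A ∧ b ∈ S.Ek A
        conf := fun a b => S.conf a b ∧ a ∈ S.Ek A ∧ b ∈ S.Ek A
        label := S.label
        F := S.Fk A
        rc := fun a b => S.rc a b ∧ a ∈ S.Ek A ∧ b ∈ S.Fk A
        prev := fun a b => S.prev a b ∧ a ∈ S.Ek A ∧ b ∈ S.Fk A
        C0 := ((S.C0 \ B) ∪ A) ∩ S.Ek A } := rfl

lemma Fk_subset_F (S : RPESData E L) (A : Set E) : S.Fk A ⊆ S.F :=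
  fun _ h => h.1.1

lemma Fk_subset_Ek (S : RPESData E L) (A : Set E) : S.Fk A ⊆ S.Ek A :=
  fun _ h => h.1.2

lemma cf_mono (S : RPESData E L) {X Y : Set E} (h : S.ConflictFree X) (hYX : Y ⊆ X) :
    S.ConflictFree Y := fun e he e' he' => h e (hYX he) e' (hYX he')

lemma residStep_causeRespecting (S : RPESData E L) (A B : Set E)
    (hcr : S.CauseRespecting) : (S.residStep A B).CauseRespecting := by
  rw [residStep_eq]
  rintro a b ⟨hlt, ha, hb⟩
  exact ⟨⟨hlt, ha, hb⟩, fun haF => ⟨(hcr a b hlt).2 haF.1.1, hb, haF⟩⟩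

lemma residStep_isRPES (S : RPESData E L) (A B : Set E) (hS : S.IsRPES)
    (hcr : S.CauseRespecting) (hen : S.Enabled S.C0 A B) :
    (S.residStep A B).IsRPES := by
  obtain ⟨hAf, hBf, hAc, hBF, hAC, hBC, hcf, hca, hrcc, hprc⟩ := hen
  have hcr' := S.residStep_causeRespecting A B hcr
  rw [residStep_eq] at hcr' ⊢
  constructor
  case countable => exact hS.countable.mono Set.diff_subset
  case lt_carrier => rintro a b ⟨_, ha, hb⟩; exact ⟨ha, hb⟩
  case conf_carrier => rintro a b ⟨_, ha, hb⟩; exact ⟨ha, hb⟩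
  case conf_irrefl => rintro a ⟨h, _⟩; exact hS.conf_irrefl a h
  case conf_symm => rintro a b ⟨h, ha, hb⟩; exact ⟨hS.conf_symm a b h, hb, ha⟩
  case lt_irrefl => rintro a ⟨h, _⟩; exact hS.lt_irrefl a h
  case lt_trans =>
    rintro a b c ⟨h1, ha, hb⟩ ⟨h2, _, hc⟩
    exact ⟨hS.lt_trans a b c h1 h2, ha, hc⟩
  case causes_finite =>
    intro e; exact (hS.causes_finite e).subset (fun x hx => hx.1)
  case causes_cf =>
    rintro e a ha b hb ⟨hc, _⟩; exact hS.causes_cf e a ha.1 b hb.1 hc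
  case F_carrier => exact fun u hu => hu.1.2
  case rc_carrier => rintro a b ⟨_, ha, hb⟩; exact ⟨ha, hb⟩
  case rc_refl =>
    intro u hu; exact ⟨hS.rc_refl u hu.1.1, hu.1.2, hu⟩
  case rcauses_finite =>
    intro u hu; exact (hS.rcauses_finite u hu.1.1).subset (fun x hx => hx.1)
  case rcauses_cf =>
    rintro u hu a ha b hb ⟨hc, _⟩
    exact hS.rcauses_cf u hu.1.1 a ha.1 b hb.1 hc
  case prev_carrier => rintro a b ⟨_, ha, hb⟩; exact ⟨ha, hb⟩
  case prev_rc_disjoint =>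
    rintro a b ⟨⟨h1, _⟩, ⟨h2, _⟩⟩
    exact hS.prev_rc_disjoint a b ⟨h1, h2⟩
  case sc_trans =>
    rintro a b c ⟨⟨h1, ha, hb⟩, _⟩ ⟨⟨h2, _, hc⟩, _⟩
    exact hcr' a c ⟨hS.lt_trans a b c h1 h2, ha, hc⟩
  case conf_hered_sc =>
    rintro a b c ⟨hcab, ha, hb⟩ ⟨⟨hltbc, _, hc⟩, _⟩
    exact ⟨hS.conf_hered_sc a b c hcab (hcr b c hltbc), ha, hc⟩
  case C0_carrier => exact Set.inter_subset_right
  case C0_finite =>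
    refine ((hS.C0_finite.union hAf).subset ?_)
    rintro x ⟨(⟨hx, _⟩ | hx), _⟩
    · exact Or.inl hx
    · exact Or.inr hx
  case C0_closed =>
    rintro e ⟨he, heE⟩ e' ⟨hlt, he'E, _⟩
    refine ⟨?_, he'E⟩
    rcases he with he | he
    · -- e ∈ S.C0 \ B
      have he'C : e' ∈ S.C0 := hS.C0_closed e he.1 e' hlt
      left
      refine ⟨he'C, fun he'B => ?_⟩
      have hpe : S.prev e e' := (hcr e' e hlt).2 (hBF he'B)
      exact hprc e' he'B e hpe (Or.inl he.1)
    · -- e ∈ A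
      exact Or.inl (hca e he e' hlt)
  case C0_cf =>
    rintro e ⟨he, _⟩ e' ⟨he', _⟩ ⟨hc, _⟩
    have h1 : e ∈ S.C0 ∪ A := by rcases he with h | h; exact Or.inl h.1; exact Or.inr h
    have h2 : e' ∈ S.C0 ∪ A := by rcases he' with h | h; exact Or.inl h.1; exact Or.inr h
    exact hcf e h1 e' h2 hc

/-- After a step whose executed-removed set `Ã` is contained in the current
configuration `D`, any step enabled at `D` is also enabled in the residual,
at `D ∩ E'`. -/
lemma residStep_enabled_later (S : RPESData E L) (A B : Set E) (hS : S.IsRPES)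
    (hcr : S.CauseRespecting) {D A' B' : Set E} (hAt : S.Atk A ⊆ D)
    (hen' : S.Enabled D A' B') :
    A' ⊆ S.Ek A ∧ B' ⊆ S.Fk A ∧ S.Atk A ⊆ (D \ B') ∪ A' ∧
      (S.residStep A B).Enabled (D ∩ S.Ek A) A' B' := by
  obtain ⟨hAf, hBf, hAc, hBF, hAC, hBC, hcf, hca, hrcc, hprc⟩ := hen'
  have hDcf : S.ConflictFree D := S.cf_mono hcf Set.subset_union_left
  have hADempty : ∀ x ∈ A', x ∉ D := fun x hx hxD =>
    (Set.eq_empty_iff_forall_notMem.mp hAC x) ⟨hx, hxD⟩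
  -- no element of CAk is in D
  have hCAD : ∀ x ∈ S.CAk A, x ∉ D := by
    rintro x ⟨_, a, haAt, hconf⟩ hxD
    exact hDcf x hxD a (hAt haAt) hconf
  -- A' is inside the new carrier
  have hA'E : A' ⊆ S.Ek A := by
    intro x hx
    refine ⟨hAc hx, ?_⟩
    rintro (hxAt | hxCA)
    · exact hADempty x hx (hAt hxAt)
    · obtain ⟨_, a, haAt, hconf⟩ := hxCA
      exact hcf x (Or.inr hx) a (Or.inl (hAt haAt)) hconf
  -- B' avoids Atk
  have hB'At : ∀ u ∈ B', u ∉ S.Atk A := by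
    rintro u huB (⟨_, hnF⟩ | ⟨huF, x, hxA, hlt⟩)
    · exact hnF (hBF huB)
    · exact hprc u huB x ((hcr u x hlt).2 huF) (Or.inl (hAt (Or.inl hxA)))
  -- B' is inside the new reversible set
  have hB'F : B' ⊆ S.Fk A := by
    intro u hu
    have huD : u ∈ D := hBC hu
    have huE : u ∈ S.Ek A := by
      refine ⟨hS.F_carrier (hBF hu), ?_⟩
      rintro (hAt' | hCA')
      · exact hB'At u hu hAt'
      · exact hCAD u hCA' huD
    refine ⟨⟨hBF hu, huE⟩, ?_⟩
    rintro (⟨_, a, haCA, hrca⟩ | ⟨_, a, haAt, hpa⟩)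
    · exact hCAD a haCA (hrcc u hu a hrca).1
    · exact hprc u hu a hpa (Or.inl (hAt haAt))
  refine ⟨hA'E, hB'F, ?_, ?_⟩
  · intro a ha
    exact Or.inl ⟨hAt ha, fun haB => hB'At a haB ha⟩
  · rw [residStep_eq]
    refine ⟨hAf, hBf, hA'E, hB'F, ?_, ?_, ?_, ?_, ?_, ?_⟩
    · apply Set.eq_empty_iff_forall_notMem.mpr
      rintro x ⟨hx, hxD, _⟩
      exact hADempty x hx hxD
    · exact fun u hu => ⟨hBC hu, hB'F hu |>.1.2⟩
    · rintro e he e' he' ⟨hc, _⟩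
      have h1 : e ∈ D ∪ A' := by rcases he with h | h; exact Or.inl h.1; exact Or.inr h
      have h2 : e' ∈ D ∪ A' := by rcases he' with h | h; exact Or.inl h.1; exact Or.inr h
      exact hcf e h1 e' h2 hc
    · rintro e he e' ⟨hlt, he'E, _⟩
      have h := hca e he e' hlt
      exact ⟨⟨h.1, he'E⟩, h.2⟩
    · rintro e he e' ⟨hrc, he'E, _⟩
      have h := hrcc e he e' hrc
      exact ⟨⟨h.1, he'E⟩, h.2⟩
    · rintro e he e' ⟨hp, _, _⟩ hmem
      refine hprc e he e' hp ?_
      rcases hmem with h | h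
      · exact Or.inl h.1
      · exact Or.inr h

/-- Traces are preserved by the residual operation. -/
lemma residStep_trace (S : RPESData E L) (A B : Set E) (hS : S.IsRPES)
    (hcr : S.CauseRespecting) :
    ∀ (t : List (Set E × Set E)) (D C : Set E), S.Atk A ⊆ D →
      S.IsTraceFrom D t C →
      (S.residStep A B).IsTraceFrom (D ∩ S.Ek A) t (C ∩ S.Ek A) := by
  intro t
  induction t with
  | nil =>
    intro D C _ h
    show C ∩ S.Ek A = D ∩ S.Ek A
    rw [show C = D from h]
  | cons p t ih =>
    rintro D C hAt ⟨hen', htail⟩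
    obtain ⟨hA'E, _, hAt', hen''⟩ := S.residStep_enabled_later A B hS hcr hAt hen'
    refine ⟨hen'', ?_⟩
    have hset : ((D ∩ S.Ek A) \ p.2) ∪ p.1 = ((D \ p.2) ∪ p.1) ∩ S.Ek A := by
      ext x
      simp only [Set.mem_union, Set.mem_inter_iff, Set.mem_diff]
      have := @hA'E x
      tauto
    rw [hset]
    exact ih _ C hAt' htail

lemma Atk_subset_step (S : RPESData E L) {A B : Set E} (hen : S.Enabled S.C0 A B) :
    S.Atk A ⊆ (S.C0 \ B) ∪ A := by
  rintro a (⟨haA, _⟩ | ⟨_, x, hxA, hlt⟩)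
  · exact Or.inr haA
  · exact Or.inl (hen.2.2.2.2.2.2.2.1 x hxA.1 a hlt)

lemma resid_aux {E L : Type} :
    ∀ (t : List (Set E × Set E)) (R : RPESData E L), R.IsRPES → R.CauseRespecting →
      R.IsTrace t → ∀ k,
      (R.resid (t.take k)).IsRPES ∧ (R.resid (t.take k)).CauseRespecting := by
  intro t
  induction t with
  | nil =>
    intro R hS hcr _ k
    simp only [List.take_nil]
    exact ⟨hS, hcr⟩
  | cons p t ih =>
    intro R hS hcr ht k
    cases k with
    | zero => exact ⟨hS, hcr⟩
    | succ k =>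
      obtain ⟨C, hen, htail⟩ := ht
      have hstep := residStep_isRPES R p.1 p.2 hS hcr hen
      have hcr' := residStep_causeRespecting R p.1 p.2 hcr
      have htr := residStep_trace R p.1 p.2 hS hcr t _ C (R.Atk_subset_step hen) htail
      have htrace : (R.residStep p.1 p.2).IsTrace t := ⟨C ∩ R.Ek p.1, htr⟩
      exact ih (R.residStep p.1 p.2) hstep hcr' htrace k

end RPESData

/-- For a cause-respecting RPES `R` and any trace `t`, every
prefix-wise residual `R \ tᵢ` (in particular `R \ t` itself) is again a
cause-respecting RPES. -/
theorem resid_causeRespecting_rpes {E L : Type} (R : RPESData E L)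
    (h : R.IsRPES) (hcr : R.CauseRespecting) (t : List (Set E × Set E))
    (ht : R.IsTrace t) (k : ℕ) (hk : k ≤ t.length) :
    (R.resid (t.take k)).IsRPES ∧ (R.resid (t.take k)).CauseRespecting := by
  exact RPESData.resid_aux t R h hcr ht k
end

section
/- For a cause-respecting RPES E with trace t = (A₁∪B̲₁)…(Aₙ∪B̲ₙ), each reversed set is still reversible in the preceding residual: Bᵢ ⊆ F^{i-1} for all 1 ≤ i ≤ n, and each executed set is still present: Aᵢ ⊆ E^{i-1} for all 1 ≤ i ≤ n. -/
section Aux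

variable {E L : Type}

/-- The set of events removed "directly" by `residStep`. -/
def Att (S : RPESData E L) (A : Set E) : Set E :=
  (A \ S.F) ∪ {a | a ∈ S.F ∧ ∃ x ∈ A \ S.F, S.lt a x}

/-- The conflict-closure part removed by `residStep`. -/
def CAt (S : RPESData E L) (A : Set E) : Set E :=
  {e | e ∈ S.carrier ∧ ∃ a ∈ Att S A, S.conf e a}

lemma residStep_carrier (S : RPESData E L) (A B : Set E) :
    (S.residStep A B).carrier = S.carrier \ (Att S A ∪ CAt S A) := rfl

lemma residStep_F (S : RPESData E L) (A B : Set E) :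
    (S.residStep A B).F =
      ((S.F ∩ (S.carrier \ (Att S A ∪ CAt S A))) \
        ({e | e ∈ S.F ∧ ∃ a ∈ CAt S A, S.rc a e} ∪
         {e | e ∈ S.F ∧ ∃ a ∈ Att S A, S.prev a e})) := rfl

/-- `S` is a "restriction" of `R`. -/
def SubOf (R S : RPESData E L) : Prop :=
  S.F ⊆ R.F ∧ S.F ⊆ S.carrier ∧
  (∀ a b, S.lt a b → R.lt a b) ∧ (∀ a b, S.conf a b → R.conf a b) ∧
  (∀ a b, S.rc a b → R.rc a b) ∧ (∀ a b, S.prev a b → R.prev a b)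

lemma subOf_refl (R : RPESData E L) (h : R.IsRPES) : SubOf R R :=
  ⟨fun _ hx => hx, h.F_carrier, fun _ _ h => h, fun _ _ h => h,
   fun _ _ h => h, fun _ _ h => h⟩

lemma subOf_step {R S : RPESData E L} (hs : SubOf R S) (A B : Set E) :
    SubOf R (S.residStep A B) := by
  obtain ⟨h1, h2, h3, h4, h5, h6⟩ := hs
  refine ⟨?_, ?_, ?_, ?_, ?_, ?_⟩
  · intro x hx
    rw [residStep_F] at hx
    exact h1 hx.1.1
  · intro x hx
    rw [residStep_F] at hx
    exact hx.1.2
  · intro a b hab; exact h3 a b hab.1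
  · intro a b hab; exact h4 a b hab.1
  · intro a b hab; exact h5 a b hab.1
  · intro a b hab
    rcases hab with ⟨hab, _, hb⟩
    exact h6 a b hab

/-- Persistence: a set `X` of events contained in the current configuration,
each of whose reversible members has a preventing event in `X`, stays inside
every configuration at which a step of the remaining trace is taken. -/
lemma stable (R : RPESData E L) :
    ∀ (t : List (Set E × Set E)) (C Cend X : Set E),
      R.IsTraceFrom C t Cend → X ⊆ C →
      (∀ x ∈ X, (∀ p ∈ t, x ∉ p.2) ∨ ∃ y ∈ X, R.prev y x) →
      ∀ p ∈ t, ∃ D, X ⊆ D ∧ R.Enabled D p.1 p.2 := by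
  intro t
  induction t with
  | nil => intro C Cend X _ _ _ p hp; exact absurd hp (by simp)
  | cons q rest ih =>
    intro C Cend X htr hXC hcond p hp
    obtain ⟨hen, htr'⟩ := htr
    have hXB : ∀ x ∈ X, x ∉ q.2 := by
      intro x hx hxB
      rcases hcond x hx with hL | ⟨y, hy, hprev⟩
      · exact hL q (by simp) hxB
      · have hprev' := hen.2.2.2.2.2.2.2.2.2 x hxB y hprev
        exact hprev' (Or.inl (hXC hy))
    rcases List.mem_cons.mp hp with hp | hp
    · subst hp; exact ⟨C, hXC, hen⟩
    · have hX' : X ⊆ (C \ q.2) ∪ q.1 := fun x hx => Or.inl ⟨hXC hx, hXB x hx⟩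
      exact ih ((C \ q.2) ∪ q.1) Cend X htr' hX'
        (fun x hx => (hcond x hx).imp (fun hL r hr => hL r (by simp [hr])) id) p hp

/-- The survival argument: events of a future step (enabled at a configuration
`D` containing all the directly removed events `Att S A`) survive `residStep`. -/
lemma survive (R S : RPESData E L) (hcr : R.CauseRespecting) (hs : SubOf R S)
    (A B D A' B' : Set E) (hAt : Att S A ⊆ D) (hen : R.Enabled D A' B')
    (hA' : A' ⊆ S.carrier) (hB' : B' ⊆ S.F) :
    A' ⊆ (S.residStep A B).carrier ∧ B' ⊆ (S.residStep A B).F := by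
  obtain ⟨hsF, hsFc, hslt, hsconf, hsrc, hsprev⟩ := hs
  obtain ⟨_, _, _, _, hAC, hBC, hcf, _, hrc, hprev⟩ := hen
  have hDcf : ∀ a ∈ D, ∀ b ∈ D, ¬ R.conf a b := fun a ha b hb =>
    hcf a (Or.inl ha) b (Or.inl hb)
  constructor
  · intro e he
    rw [residStep_carrier]
    refine ⟨hA' he, ?_⟩
    intro hmem
    have heD : e ∉ D := by
      intro heD
      have : e ∈ A' ∩ D := ⟨he, heD⟩
      rw [hAC] at this
      exact this
    rcases hmem with hAtm | hCAm
    · exact heD (hAt hAtm)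
    · rcases hCAm with ⟨_, a, haAt, hconf⟩
      exact hcf e (Or.inr he) a (Or.inl (hAt haAt)) (hsconf _ _ hconf)
  · intro e he
    rw [residStep_F]
    have heF : e ∈ S.F := hB' he
    have heD : e ∈ D := hBC he
    have heAt : e ∉ Att S A := by
      intro hmem
      rcases hmem with ⟨_, heNF⟩ | ⟨_, z, hz, hlt⟩
      · exact heNF heF
      · have hpzx : R.prev z e := (hcr e z (hslt _ _ hlt)).2 (hsF heF)
        exact hprev e he z hpzx (Or.inl (hAt (Or.inl hz)))
    refine ⟨⟨heF, hsFc heF, ?_⟩, ?_⟩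
    · intro hmem
      rcases hmem with hAtm | ⟨_, a, haAt, hconf⟩
      · exact heAt hAtm
      · exact hDcf e heD a (hAt haAt) (hsconf _ _ hconf)
    · intro hmem
      rcases hmem with ⟨_, a, haCA, hrcae⟩ | ⟨_, a, haAt, hprevae⟩
      · have haD : a ∈ D := (hrc e he a (hsrc _ _ hrcae)).1
        rcases haCA with ⟨_, b, hbAt, hconf⟩
        exact hDcf a haD b (hAt hbAt) (hsconf _ _ hconf)
      · exact hprev e he a (hsprev _ _ hprevae) (Or.inl (hAt haAt))

lemma resid_nil (S : RPESData E L) : S.resid [] = S := rfl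

lemma resid_cons (S : RPESData E L) (p : Set E × Set E) (l : List (Set E × Set E)) :
    S.resid (p :: l) = (S.residStep p.1 p.2).resid l := rfl

/-- The main induction. -/
lemma key (R : RPESData E L) (hcr : R.CauseRespecting) :
    ∀ (t : List (Set E × Set E)) (C Cend : Set E) (S : RPESData E L),
      R.IsTraceFrom C t Cend → SubOf R S →
      (∀ p ∈ t, p.1 ⊆ S.carrier ∧ p.2 ⊆ S.F) →
      ∀ i (hi : i < t.length),
        (t.get ⟨i, hi⟩).2 ⊆ (S.resid (t.take i)).F ∧
        (t.get ⟨i, hi⟩).1 ⊆ (S.resid (t.take i)).carrier := by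
  intro t
  induction t with
  | nil => intro C Cend S _ _ _ i hi; exact absurd hi (by simp)
  | cons p rest ih =>
    intro C Cend S htr hs hAF i hi
    obtain ⟨hen, htr'⟩ := htr
    match i with
    | 0 =>
      have h0 := hAF p (by simp)
      exact ⟨h0.2, h0.1⟩
    | (j+1) =>
      have hAt : Att S p.1 ⊆ (C \ p.2) ∪ p.1 := by
        intro x hx
        rcases hx with ⟨hxA, _⟩ | ⟨_, z, hz, hlt⟩
        · exact Or.inr hxA
        · exact Or.inl (hen.2.2.2.2.2.2.2.1 z hz.1 x (hs.2.2.1 _ _ hlt))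
      have hcond : ∀ x ∈ Att S p.1,
          (∀ q ∈ rest, x ∉ q.2) ∨ ∃ y ∈ Att S p.1, R.prev y x := by
        intro x hx
        rcases hx with ⟨_, hxNF⟩ | ⟨hxF, z, hz, hlt⟩
        · exact Or.inl (fun q hq hxq => hxNF ((hAF q (by simp [hq])).2 hxq))
        · exact Or.inr ⟨z, Or.inl hz, (hcr x z (hs.2.2.1 _ _ hlt)).2 (hs.1 hxF)⟩
      have hAF' : ∀ q ∈ rest,
          q.1 ⊆ (S.residStep p.1 p.2).carrier ∧ q.2 ⊆ (S.residStep p.1 p.2).F := by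
        intro q hq
        obtain ⟨D, hXD, henD⟩ :=
          stable R rest ((C \ p.2) ∪ p.1) Cend (Att S p.1) htr' hAt hcond q hq
        exact survive R S hcr hs p.1 p.2 D q.1 q.2 hXD henD
          (hAF q (by simp [hq])).1 (hAF q (by simp [hq])).2
      have hj : j < rest.length := Nat.succ_lt_succ_iff.mp hi
      have := ih ((C \ p.2) ∪ p.1) Cend (S.residStep p.1 p.2) htr'
        (subOf_step hs p.1 p.2) hAF' j hj
      exact this

/-- Every step of a trace has its sets inside the original structure. -/
lemma trace_mem (R : RPESData E L) :
    ∀ (t : List (Set E × Set E)) (C Cend : Set E),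
      R.IsTraceFrom C t Cend → ∀ p ∈ t, p.1 ⊆ R.carrier ∧ p.2 ⊆ R.F := by
  intro t
  induction t with
  | nil => intro C Cend _ p hp; exact absurd hp (by simp)
  | cons q rest ih =>
    intro C Cend htr p hp
    obtain ⟨hen, htr'⟩ := htr
    rcases List.mem_cons.mp hp with hp | hp
    · subst hp; exact ⟨hen.2.2.1, hen.2.2.2.1⟩
    · exact ih ((C \ q.2) ∪ q.1) Cend htr' p hp

end Aux

/-- For a cause-respecting RPES and a trace `t`, each reversed set
`Bᵢ` is still reversible in the preceding residual (`Bᵢ ⊆ F^{i-1}`), and each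
executed set `Aᵢ` is still present (`Aᵢ ⊆ E^{i-1}`). -/
theorem trace_steps_in_resid {E L : Type} (R : RPESData E L) (h : R.IsRPES)
    (hcr : R.CauseRespecting) (t : List (Set E × Set E)) (ht : R.IsTrace t)
    (i : ℕ) (hi : i < t.length) :
    (t.get ⟨i, hi⟩).2 ⊆ (R.resid (t.take i)).F ∧
    (t.get ⟨i, hi⟩).1 ⊆ (R.resid (t.take i)).carrier := by
  obtain ⟨Cend, ht⟩ := ht
  exact key R hcr t R.C0 Cend R ht (subOf_refl R h) (trace_mem R t R.C0 Cend ht) i hi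
end

section
/- Trace suffix property: if E is a cause-respecting RPES and t', t't'' ∈ Traces(E), then t'' ∈ Traces(E \ t'). -/
namespace RPESData

variable {E : Type} {L : Type}

/-- The set `At` of events removed by executing `A`: irreversible events of `A`
together with their reversible causes. -/
def cset (R : RPESData E L) (A : Set E) : Set E :=
  (A \ R.F) ∪ {a | a ∈ R.F ∧ ∃ x ∈ A \ R.F, R.lt a x}

/-- Events in conflict with some event of `cset`. -/
def kset (R : RPESData E L) (A : Set E) : Set E :=
  {e | e ∈ R.carrier ∧ ∃ a ∈ R.cset A, R.conf e a}

/-- The carrier of the residual. -/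
def eset (R : RPESData E L) (A : Set E) : Set E :=
  R.carrier \ (R.cset A ∪ R.kset A)

/-- The reversible events of the residual. -/
def fset (R : RPESData E L) (A : Set E) : Set E :=
  (R.F ∩ R.eset A) \
    ({e | e ∈ R.F ∧ ∃ a ∈ R.kset A, R.rc a e} ∪
     {e | e ∈ R.F ∧ ∃ a ∈ R.cset A, R.prev a e})

lemma residStep_def (R : RPESData E L) (A B : Set E) :
    R.residStep A B =
      { carrier := R.eset A
        lt := fun a b => R.lt a b ∧ a ∈ R.eset A ∧ b ∈ R.eset A
        conf := fun a b => R.conf a b ∧ a ∈ R.eset A ∧ b ∈ R.eset A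
        label := R.label
        F := R.fset A
        rc := fun a b => R.rc a b ∧ a ∈ R.eset A ∧ b ∈ R.fset A
        prev := fun a b => R.prev a b ∧ a ∈ R.eset A ∧ b ∈ R.fset A
        C0 := ((R.C0 \ B) ∪ A) ∩ R.eset A } := rfl

lemma resid_cons (R : RPESData E L) (p : Set E × Set E) (t : List (Set E × Set E)) :
    R.resid (p :: t) = (R.residStep p.1 p.2).resid t := rfl

lemma resid_nil (R : RPESData E L) : R.resid [] = R := rfl

/-- Simulation: any trace of `R` from a config `C` containing `cset A` remains a
trace of the residual from `C ∩ eset A`. -/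
lemma sim (R : RPESData E L) (hcr : R.CauseRespecting) (A B : Set E) :
    ∀ (t : List (Set E × Set E)) (C C'' : Set E), C ⊆ R.carrier → R.ConflictFree C →
      R.cset A ⊆ C → R.IsTraceFrom C t C'' →
      (R.residStep A B).IsTraceFrom (C ∩ R.eset A) t (C'' ∩ R.eset A) := by
  intro t
  induction t with
  | nil =>
      intro C C'' _ _ _ ht
      simp only [IsTraceFrom] at ht ⊢
      rw [ht]
  | cons p t ih =>
      intro C C'' hsub hcf hTC ht
      obtain ⟨he, ht⟩ := ht
      obtain ⟨hAf, hBf, hAc, hBF, hAC, hBC, hcfU, hcauses, hrcc, hprevc⟩ := he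
      -- basic facts
      have hK : ∀ e ∈ C, e ∉ R.kset A := by
        rintro e heC ⟨_, a, haT, hconf⟩
        exact hcf e heC a (hTC haT) hconf
      have fact2 : ∀ e ∈ p.1, e ∉ R.cset A := by
        intro e he hmem
        have : e ∈ p.1 ∩ C := ⟨he, hTC hmem⟩
        rw [hAC] at this
        exact this
      have fact3 : ∀ e ∈ p.1, e ∉ R.kset A := by
        rintro e he ⟨_, a, haT, hconf⟩
        exact hcfU e (Or.inr he) a (Or.inl (hTC haT)) hconf
      have fact4 : p.1 ⊆ R.eset A := by
        intro e he
        exact ⟨hAc he, fun hmem => hmem.elim (fact2 e he) (fact3 e he)⟩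
      have fact5 : ∀ b ∈ p.2, b ∉ R.cset A := by
        intro b hb hmem
        rcases hmem with h | ⟨hbF, x, hxAF, hlt⟩
        · exact h.2 (hBF hb)
        · have hpxb : R.prev x b := (hcr b x hlt).2 (hBF hb)
          exact hprevc b hb x hpxb (Or.inl (hTC (Or.inl hxAF)))
      have fact7 : p.2 ⊆ R.eset A := by
        intro b hb
        exact ⟨hsub (hBC hb), fun hmem => hmem.elim (fact5 b hb) (hK b (hBC hb))⟩
      have fact8 : p.2 ⊆ R.fset A := by
        intro b hb
        refine ⟨⟨hBF hb, fact7 hb⟩, ?_⟩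
        rintro (⟨_, a, haK, hrcab⟩ | ⟨_, a, haT, hpab⟩)
        · have haC : a ∈ C := (hrcc b hb a hrcab).1
          exact hK a haC haK
        · exact hprevc b hb a hpab (Or.inl (hTC haT))
      -- the enabled step in the residual
      have hen : (R.residStep A B).Enabled (C ∩ R.eset A) p.1 p.2 := by
        rw [residStep_def]
        refine ⟨hAf, hBf, fact4, fact8, ?_, ?_, ?_, ?_, ?_, ?_⟩
        · rw [Set.eq_empty_iff_forall_notMem]
          rintro x ⟨hx1, hx2, _⟩
          have : x ∈ p.1 ∩ C := ⟨hx1, hx2⟩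
          rw [hAC] at this
          exact this
        · intro b hb
          exact ⟨hBC hb, fact7 hb⟩
        · rintro e he e' he' ⟨hconf, _, _⟩
          have he1 : e ∈ C ∪ p.1 := he.elim (fun h => Or.inl h.1) Or.inr
          have he2 : e' ∈ C ∪ p.1 := he'.elim (fun h => Or.inl h.1) Or.inr
          exact hcfU e he1 e' he2 hconf
        · rintro e he e' ⟨hlt, he'E, _⟩
          have h1 : e' ∈ C \ p.2 := hcauses e he e' hlt
          exact ⟨⟨h1.1, he'E⟩, h1.2⟩
        · rintro e he e' ⟨hrcab, he'E, _⟩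
          have h1 : e' ∈ C \ (p.2 \ {e}) := hrcc e he e' hrcab
          exact ⟨⟨h1.1, he'E⟩, h1.2⟩
        · rintro e he e' ⟨hpab, _, _⟩ hmem
          have : e' ∈ C ∪ p.1 := hmem.elim (fun h => Or.inl h.1) Or.inr
          exact hprevc e he e' hpab this
      refine ⟨hen, ?_⟩
      have heq : ((C ∩ R.eset A) \ p.2) ∪ p.1 = ((C \ p.2) ∪ p.1) ∩ R.eset A := by
        ext x
        have h4 : x ∈ p.1 → x ∈ R.eset A := fun h => fact4 h
        simp only [Set.mem_union, Set.mem_diff, Set.mem_inter_iff]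
        tauto
      rw [heq]
      apply ih
      · intro x hx
        rcases hx with h | h
        · exact hsub h.1
        · exact hAc h
      · intro e he e' he' hconf
        have he1 : e ∈ C ∪ p.1 := he.elim (fun h => Or.inl h.1) Or.inr
        have he2 : e' ∈ C ∪ p.1 := he'.elim (fun h => Or.inl h.1) Or.inr
        exact hcfU e he1 e' he2 hconf
      · intro a ha
        exact Or.inl ⟨hTC ha, fun hb => fact5 a hb ha⟩
      · exact ht

/-- The residual of a cause-respecting RPES is cause-respecting. -/
lemma residStep_cr (R : RPESData E L) (hcr : R.CauseRespecting) (A B : Set E) :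
    (R.residStep A B).CauseRespecting := by
  rw [residStep_def]
  rintro a b ⟨hlt, haE, hbE⟩
  refine ⟨⟨hlt, haE, hbE⟩, fun haF => ?_⟩
  have haF' : a ∈ R.F := haF.1.1
  exact ⟨(hcr a b hlt).2 haF', hbE, haF⟩

lemma trace_split (R : RPESData E L) :
    ∀ (t1 t2 : List (Set E × Set E)) (C C'' : Set E),
      R.IsTraceFrom C (t1 ++ t2) C'' →
      ∃ Cm, R.IsTraceFrom C t1 Cm ∧ R.IsTraceFrom Cm t2 C'' := by
  intro t1
  induction t1 with
  | nil => intro t2 C C'' h; exact ⟨C, rfl, h⟩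
  | cons p t ih =>
      intro t2 C C'' h
      obtain ⟨he, ht⟩ := h
      obtain ⟨Cm, h1, h2⟩ := ih t2 _ C'' ht
      exact ⟨Cm, ⟨he, h1⟩, h2⟩

/-- Main auxiliary induction. -/
lemma trace_suffix_aux :
    ∀ (t' : List (Set E × Set E)) (R : RPESData E L), R.CauseRespecting →
      R.ConflictFree R.C0 → R.C0 ⊆ R.carrier →
      ∀ (t'' : List (Set E × Set E)) (C'' : Set E),
        R.IsTraceFrom R.C0 (t' ++ t'') C'' →
        ∃ D, (R.resid t').IsTraceFrom (R.resid t').C0 t'' D := by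
  intro t'
  induction t' with
  | nil =>
      intro R _ _ _ t'' C'' h
      exact ⟨C'', h⟩
  | cons p rest ih =>
      intro R hcr hcf hc0 t'' C'' h
      obtain ⟨he, ht⟩ := h
      obtain ⟨hAf, hBf, hAc, hBF, hAC, hBC, hcfU, hcauses, hrcc, hprevc⟩ := he
      set R1 := R.residStep p.1 p.2 with hR1
      -- invariants for the starting configuration of the tail trace
      have hDsub : (R.C0 \ p.2) ∪ p.1 ⊆ R.carrier := by
        intro x hx
        rcases hx with h | h
        · exact hc0 h.1
        · exact hAc h
      have hDcf : R.ConflictFree ((R.C0 \ p.2) ∪ p.1) := by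
        intro e he e' he' hconf
        have he1 : e ∈ R.C0 ∪ p.1 := he.elim (fun h => Or.inl h.1) Or.inr
        have he2 : e' ∈ R.C0 ∪ p.1 := he'.elim (fun h => Or.inl h.1) Or.inr
        exact hcfU e he1 e' he2 hconf
      have hTD : R.cset p.1 ⊆ (R.C0 \ p.2) ∪ p.1 := by
        rintro a (h | ⟨haF, x, hxAF, hlt⟩)
        · exact Or.inr h.1
        · have : a ∈ R.C0 \ p.2 := hcauses x hxAF.1 a hlt
          exact Or.inl this
      have hsim := R.sim hcr p.1 p.2 (rest ++ t'') _ C'' hDsub hDcf hTD ht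
      have hC0eq : ((R.C0 \ p.2) ∪ p.1) ∩ R.eset p.1 = R1.C0 := rfl
      rw [hC0eq] at hsim
      obtain ⟨Cm, h1, h2⟩ := R1.trace_split rest t'' _ _ hsim
      -- preserved hypotheses
      have hcr1 : R1.CauseRespecting := R.residStep_cr hcr p.1 p.2
      have hcf1 : R1.ConflictFree R1.C0 := by
        rw [hR1, residStep_def]
        rintro e he e' he' ⟨hconf, _, _⟩
        have he1 : e ∈ R.C0 ∪ p.1 := by
          rcases he.1 with h | h
          · exact Or.inl h.1
          · exact Or.inr h
        have he2 : e' ∈ R.C0 ∪ p.1 := by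
          rcases he'.1 with h | h
          · exact Or.inl h.1
          · exact Or.inr h
        exact hcfU e he1 e' he2 hconf
      have hc01 : R1.C0 ⊆ R1.carrier := by
        rw [hR1, residStep_def]
        exact Set.inter_subset_right
      -- apply IH to R1 with the recombined trace rest ++ t''
      have hcomb : R1.IsTraceFrom R1.C0 (rest ++ t'') (C'' ∩ R.eset p.1) := hsim
      obtain ⟨D, hD⟩ := ih R1 hcr1 hcf1 hc01 t'' _ hcomb
      exact ⟨D, hD⟩

end RPESData

/-- If `t'` and `t't''` are traces of a cause-respecting RPES `R`,
then `t''` is a trace of the residual `R \ t'`. -/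
theorem trace_suffix_resid {E L : Type} (R : RPESData E L) (h : R.IsRPES)
    (hcr : R.CauseRespecting) (t' t'' : List (Set E × Set E))
    (h1 : R.IsTrace t') (h2 : R.IsTrace (t' ++ t'')) :
    (R.resid t').IsTrace t'' := by
  obtain ⟨C'', h2⟩ := h2
  obtain ⟨D, hD⟩ := RPESData.trace_suffix_aux t' R hcr h.C0_cf h.C0_carrier t'' C'' h2
  exact ⟨D, hD⟩
end

section
/- For a cause-respecting RPES E: (i) for every configuration last(t) ∈ Conf(E), the residual E \ t belongs to Reach(E); and (ii) for every E' ∈ Reach(E), there exists a trace t with last(t) ∈ Conf(E) such that E' = E \ t. -/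
namespace RPESData

variable {E L : Type}

/-! ### Auxiliary descriptions of `residStep` -/

def Att (R : RPESData E L) (A : Set E) : Set E :=
  (A \ R.F) ∪ {a | a ∈ R.F ∧ ∃ x ∈ A \ R.F, R.lt a x}

def CAset (R : RPESData E L) (A : Set E) : Set E :=
  {e | e ∈ R.carrier ∧ ∃ a ∈ R.Att A, R.conf e a}

def Ecar (R : RPESData E L) (A : Set E) : Set E :=
  R.carrier \ (R.Att A ∪ R.CAset A)

def Fnew (R : RPESData E L) (A : Set E) : Set E :=
  (R.F ∩ R.Ecar A) \
    ({e | e ∈ R.F ∧ ∃ a ∈ R.CAset A, R.rc a e} ∪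
      {e | e ∈ R.F ∧ ∃ a ∈ R.Att A, R.prev a e})

lemma residStep_carrier (R : RPESData E L) (A B : Set E) :
    (R.residStep A B).carrier = R.Ecar A := rfl

lemma residStep_lt (R : RPESData E L) (A B : Set E) (a b : E) :
    (R.residStep A B).lt a b ↔ R.lt a b ∧ a ∈ R.Ecar A ∧ b ∈ R.Ecar A := Iff.rfl

lemma residStep_conf (R : RPESData E L) (A B : Set E) (a b : E) :
    (R.residStep A B).conf a b ↔ R.conf a b ∧ a ∈ R.Ecar A ∧ b ∈ R.Ecar A := Iff.rfl

lemma residStep_F (R : RPESData E L) (A B : Set E) :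
    (R.residStep A B).F = R.Fnew A := rfl

lemma residStep_rc (R : RPESData E L) (A B : Set E) (a b : E) :
    (R.residStep A B).rc a b ↔ R.rc a b ∧ a ∈ R.Ecar A ∧ b ∈ R.Fnew A := Iff.rfl

lemma residStep_prev (R : RPESData E L) (A B : Set E) (a b : E) :
    (R.residStep A B).prev a b ↔ R.prev a b ∧ a ∈ R.Ecar A ∧ b ∈ R.Fnew A := Iff.rfl

lemma residStep_C0 (R : RPESData E L) (A B : Set E) :
    (R.residStep A B).C0 = ((R.C0 \ B) ∪ A) ∩ R.Ecar A := rfl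

/-! ### The invariant tying a residual to a configuration -/

structure Inv (R : RPESData E L) (C : Set E) (R' : RPESData E L) : Prop where
  car : R'.carrier ⊆ R.carrier
  lt_iff : ∀ a b, R'.lt a b ↔ (R.lt a b ∧ a ∈ R'.carrier ∧ b ∈ R'.carrier)
  conf_iff : ∀ a b, R'.conf a b ↔ (R.conf a b ∧ a ∈ R'.carrier ∧ b ∈ R'.carrier)
  Fsub : R'.F ⊆ R.F ∩ R'.carrier
  rc_iff : ∀ a b, R'.rc a b ↔ (R.rc a b ∧ a ∈ R'.carrier ∧ b ∈ R'.F)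
  prev_iff : ∀ a b, R'.prev a b ↔ (R.prev a b ∧ a ∈ R'.carrier ∧ b ∈ R'.F)
  c0 : R'.C0 = C ∩ R'.carrier
  Csub : C ⊆ R.carrier
  Ccf : R.ConflictFree C
  remIn : ∀ e, e ∉ R'.carrier → e ∈ C →
      (∀ y ∈ R'.carrier, ¬ R.conf e y) ∧ (∀ u ∈ R'.F, ¬ R.prev e u)
  remOut : ∀ e ∈ R.carrier, e ∉ R'.carrier → e ∉ C →
      (∃ c ∈ C, R.conf e c ∧ c ∉ R'.carrier) ∧
        (∀ b ∈ R'.carrier, ¬ R.lt e b) ∧ (∀ u ∈ R'.F, ¬ R.rc e u)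
  remF : ∀ u ∈ R.F, u ∉ R'.F →
      (u ∉ C ∧ u ∉ R'.carrier) ∨ (∃ x ∈ C, R.prev x u ∧ x ∉ R'.carrier) ∨
        (∃ a, R.rc a u ∧ a ∉ C ∧ a ∉ R'.carrier)

lemma inv_init (R : RPESData E L) (h : R.IsRPES) : R.Inv R.C0 R where
  car := Set.Subset.refl _
  lt_iff a b := ⟨fun hl => ⟨hl, (h.lt_carrier a b hl).1, (h.lt_carrier a b hl).2⟩,
    fun hl => hl.1⟩
  conf_iff a b := ⟨fun hl => ⟨hl, (h.conf_carrier a b hl).1, (h.conf_carrier a b hl).2⟩,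
    fun hl => hl.1⟩
  Fsub u hu := ⟨hu, h.F_carrier hu⟩
  rc_iff a b := ⟨fun hl => ⟨hl, (h.rc_carrier a b hl).1, (h.rc_carrier a b hl).2⟩,
    fun hl => hl.1⟩
  prev_iff a b := ⟨fun hl => ⟨hl, (h.prev_carrier a b hl).1, (h.prev_carrier a b hl).2⟩,
    fun hl => hl.1⟩
  c0 := (Set.inter_eq_left.mpr h.C0_carrier).symm
  Csub := h.C0_carrier
  Ccf := h.C0_cf
  remIn e he hC := (he (h.C0_carrier hC)).elim
  remOut e heC hnc _ := (hnc heC).elim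
  remF u hu hnu := (hnu hu).elim

/-! ### Enabledness transfer -/

lemma inv_enabled_iff {R R' : RPESData E L} {C : Set E} (h : R.IsRPES)
    (hI : R.Inv C R') (A B : Set E) :
    R.Enabled C A B ↔ R'.Enabled R'.C0 A B := by
  have hc0 := hI.c0
  constructor
  · rintro ⟨hAf, hBf, hAcar, hBF, hAC, hBC, hcf, hcau, hrc, hprev⟩
    have hAC' : ∀ a ∈ A, a ∉ C := fun a ha hc =>
      Set.eq_empty_iff_forall_notMem.mp hAC a ⟨ha, hc⟩
    have hAsub : A ⊆ R'.carrier := by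
      intro a ha
      by_contra hna
      by_cases haC : a ∈ C
      · exact hAC' a ha haC
      · obtain ⟨⟨c, hcC, hconf, -⟩, -, -⟩ := hI.remOut a (hAcar ha) hna haC
        exact hcf a (Or.inr ha) c (Or.inl hcC) hconf
    have hBsub : B ⊆ R'.F := by
      intro u hu
      by_contra hnu
      rcases hI.remF u (hBF hu) hnu with ⟨hnC, -⟩ | ⟨x, hxC, hxp, -⟩ | ⟨a, har, hanC, -⟩
      · exact hnC (hBC hu)
      · exact hprev u hu x hxp (Or.inl hxC)
      · exact hanC (hrc u hu a har).1
    refine ⟨hAf, hBf, hAsub, hBsub, ?_, ?_, ?_, ?_, ?_, ?_⟩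
    · rw [hc0]
      ext x
      simp only [Set.mem_inter_iff, Set.mem_empty_iff_false, iff_false]
      rintro ⟨hxA, hxC, -⟩
      exact hAC' x hxA hxC
    · rw [hc0]; exact fun u hu => ⟨hBC hu, (hI.Fsub (hBsub hu)).2⟩
    · intro e he e' he' hc
      have hc' := (hI.conf_iff e e').mp hc
      have hmem : ∀ x, x ∈ R'.C0 ∪ A → x ∈ C ∪ A := by
        rw [hc0]; rintro x (⟨hx, -⟩ | hx)
        exacts [Or.inl hx, Or.inr hx]
      exact hcf e (hmem e he) e' (hmem e' he') hc'.1
    · intro e he e' hlt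
      have h1 := (hI.lt_iff e' e).mp hlt
      have h2 := hcau e he e' h1.1
      rw [hc0]
      exact ⟨⟨h2.1, h1.2.1⟩, h2.2⟩
    · intro e he e' hr
      have h1 := (hI.rc_iff e' e).mp hr
      have h2 := hrc e he e' h1.1
      rw [hc0]
      exact ⟨⟨h2.1, h1.2.1⟩, h2.2⟩
    · intro e he e'' hp
      have h1 := (hI.prev_iff e'' e).mp hp
      intro hmem
      apply hprev e he e'' h1.1
      rcases hmem with hx | hx
      · rw [hc0] at hx; exact Or.inl hx.1
      · exact Or.inr hx
  · rintro ⟨hAf, hBf, hAsub, hBF', hAC0, hBC0, hcf', hcau', hrc', hprev'⟩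
    have hAC' : ∀ a ∈ A, a ∉ C := by
      intro a ha hC
      have hm : a ∈ A ∩ R'.C0 := ⟨ha, by rw [hc0]; exact ⟨hC, hAsub ha⟩⟩
      rw [hAC0] at hm
      exact hm
    have hBsubF : B ⊆ R.F := fun u hu => (hI.Fsub (hBF' hu)).1
    have hBcar' : B ⊆ R'.carrier := fun u hu => (hI.Fsub (hBF' hu)).2
    have hBsubC : B ⊆ C := fun u hu => by
      have := hBC0 hu; rw [hc0] at this; exact this.1
    refine ⟨hAf, hBf, fun a ha => hI.car (hAsub ha), hBsubF, ?_, hBsubC, ?_, ?_, ?_, ?_⟩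
    · ext x
      simp only [Set.mem_inter_iff, Set.mem_empty_iff_false, iff_false]
      rintro ⟨h1, h2⟩
      exact hAC' x h1 h2
    · intro e he e' he' hc
      by_cases h1 : e ∈ R'.carrier
      · by_cases h2 : e' ∈ R'.carrier
        · have he2 : e ∈ R'.C0 ∪ A := by
            rcases he with hx | hx
            · exact Or.inl (by rw [hc0]; exact ⟨hx, h1⟩)
            · exact Or.inr hx
          have he2' : e' ∈ R'.C0 ∪ A := by
            rcases he' with hx | hx
            · exact Or.inl (by rw [hc0]; exact ⟨hx, h2⟩)
            · exact Or.inr hx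
          exact hcf' e he2 e' he2' ((hI.conf_iff e e').mpr ⟨hc, h1, h2⟩)
        · have he'C : e' ∈ C := by
            rcases he' with hx | hx
            · exact hx
            · exact absurd (hAsub hx) h2
          exact (hI.remIn e' h2 he'C).1 e h1 (h.conf_symm e e' hc)
      · have heC : e ∈ C := by
          rcases he with hx | hx
          · exact hx
          · exact absurd (hAsub hx) h1
        by_cases h2 : e' ∈ R'.carrier
        · exact (hI.remIn e h1 heC).1 e' h2 hc
        · have he'C : e' ∈ C := by
            rcases he' with hx | hx
            · exact hx
            · exact absurd (hAsub hx) h2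
          exact hI.Ccf e heC e' he'C hc
    · intro e he e' hlt
      by_cases h1 : e' ∈ R'.carrier
      · have h2 := hcau' e he e' ((hI.lt_iff e' e).mpr ⟨hlt, h1, hAsub he⟩)
        rw [hc0] at h2
        exact ⟨h2.1.1, h2.2⟩
      · by_cases h2 : e' ∈ C
        · exact ⟨h2, fun hB => h1 (hBcar' hB)⟩
        · exact absurd hlt
            ((hI.remOut e' (h.lt_carrier e' e hlt).1 h1 h2).2.1 e (hAsub he))
    · intro e he e' hr
      by_cases h1 : e' ∈ R'.carrier
      · have h2 := hrc' e he e' ((hI.rc_iff e' e).mpr ⟨hr, h1, hBF' he⟩)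
        rw [hc0] at h2
        exact ⟨h2.1.1, h2.2⟩
      · by_cases h2 : e' ∈ C
        · exact ⟨h2, fun hm => h1 (hBcar' hm.1)⟩
        · exact absurd hr
            ((hI.remOut e' (h.rc_carrier e' e hr).1 h1 h2).2.2 e (hBF' he))
    · intro e he e'' hp
      by_cases h1 : e'' ∈ R'.carrier
      · have h2 := hprev' e he e'' ((hI.prev_iff e'' e).mpr ⟨hp, h1, hBF' he⟩)
        intro hmem
        apply h2
        rcases hmem with hx | hx
        · exact Or.inl (by rw [hc0]; exact ⟨hx, h1⟩)
        · exact Or.inr hx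
      · rintro (hx | hx)
        · exact (hI.remIn e'' h1 hx).2 e (hBF' he) hp
        · exact h1 (hAsub hx)

/-! ### Preservation of the invariant -/

lemma inv_step {R R' : RPESData E L} {C : Set E} (h : R.IsRPES)
    (hcr : R.CauseRespecting) (hI : R.Inv C R') {A B : Set E}
    (hE : R.Enabled C A B) :
    R.Inv ((C \ B) ∪ A) (R'.residStep A B) := by
  have hE' := (inv_enabled_iff h hI A B).mp hE
  obtain ⟨-, -, -, -, -, -, hcf, -, -, -⟩ := hE
  obtain ⟨-, -, hAsub, hBF', hAC0, hBC0, hcf', hcau', hrc', hprev'⟩ := hE'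
  have hc0 := hI.c0
  have hBcar' : B ⊆ R'.carrier := fun u hu => (hI.Fsub (hBF' hu)).2
  -- basic facts about the removed sets
  have hAtcar : R'.Att A ⊆ R'.carrier := by
    rintro x (⟨hx, -⟩ | ⟨hxF, -⟩)
    · exact hAsub hx
    · exact (hI.Fsub hxF).2
  have hAtC0A : R'.Att A ⊆ R'.C0 ∪ A := by
    rintro x (⟨hx, -⟩ | ⟨hxF, y, hy, hlt⟩)
    · exact Or.inr hx
    · exact Or.inl (hcau' y hy.1 x hlt).1
  have hAtC' : R'.Att A ⊆ (C \ B) ∪ A := by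
    rintro x (⟨hx, -⟩ | ⟨hxF, y, hy, hlt⟩)
    · exact Or.inr hx
    · have := hcau' y hy.1 x hlt
      rw [hc0] at this
      exact Or.inl ⟨this.1.1, this.2⟩
  have hCAC0A : ∀ e ∈ R'.CAset A, e ∉ R'.C0 ∪ A := by
    rintro e ⟨hecar, a, ha, hconf⟩ hmem
    exact hcf' e hmem a (hAtC0A ha) hconf
  have hCAC' : ∀ e ∈ R'.CAset A, e ∉ (C \ B) ∪ A := by
    intro e he hmem
    apply hCAC0A e he
    rcases hmem with ⟨hC, -⟩ | hA
    · exact Or.inl (by rw [hc0]; exact ⟨hC, he.1⟩)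
    · exact Or.inr hA
  have hconfR : ∀ a b, R'.conf a b → R.conf a b := fun a b hc => ((hI.conf_iff a b).mp hc).1
  refine
    { car := ?_, lt_iff := ?_, conf_iff := ?_, Fsub := ?_, rc_iff := ?_, prev_iff := ?_,
      c0 := ?_, Csub := ?_, Ccf := ?_, remIn := ?_, remOut := ?_, remF := ?_ }
  · rw [residStep_carrier]
    exact fun x hx => hI.car hx.1
  · intro a b
    rw [residStep_lt, residStep_carrier]
    constructor
    · rintro ⟨hl, ha, hb⟩
      exact ⟨((hI.lt_iff a b).mp hl).1, ha, hb⟩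
    · rintro ⟨hl, ha, hb⟩
      exact ⟨(hI.lt_iff a b).mpr ⟨hl, ha.1, hb.1⟩, ha, hb⟩
  · intro a b
    rw [residStep_conf, residStep_carrier]
    constructor
    · rintro ⟨hl, ha, hb⟩
      exact ⟨((hI.conf_iff a b).mp hl).1, ha, hb⟩
    · rintro ⟨hl, ha, hb⟩
      exact ⟨(hI.conf_iff a b).mpr ⟨hl, ha.1, hb.1⟩, ha, hb⟩
  · rw [residStep_F, residStep_carrier]
    exact fun u hu => ⟨(hI.Fsub hu.1.1).1, hu.1.2⟩
  · intro a b
    rw [residStep_rc, residStep_carrier, residStep_F]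
    constructor
    · rintro ⟨hl, ha, hb⟩
      exact ⟨((hI.rc_iff a b).mp hl).1, ha, hb⟩
    · rintro ⟨hl, ha, hb⟩
      exact ⟨(hI.rc_iff a b).mpr ⟨hl, ha.1, hb.1.1⟩, ha, hb⟩
  · intro a b
    rw [residStep_prev, residStep_carrier, residStep_F]
    constructor
    · rintro ⟨hl, ha, hb⟩
      exact ⟨((hI.prev_iff a b).mp hl).1, ha, hb⟩
    · rintro ⟨hl, ha, hb⟩
      exact ⟨(hI.prev_iff a b).mpr ⟨hl, ha.1, hb.1.1⟩, ha, hb⟩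
  · rw [residStep_C0, residStep_carrier, hc0]
    ext x
    constructor
    · rintro ⟨⟨⟨hC, -⟩, hB⟩ | hA, hEc⟩
      · exact ⟨Or.inl ⟨hC, hB⟩, hEc⟩
      · exact ⟨Or.inr hA, hEc⟩
    · rintro ⟨⟨hC, hB⟩ | hA, hEc⟩
      · exact ⟨Or.inl ⟨⟨hC, hEc.1⟩, hB⟩, hEc⟩
      · exact ⟨Or.inr hA, hEc⟩
  · rintro x (⟨hC, -⟩ | hA)
    · exact hI.Csub hC
    · exact hI.car (hAsub hA)
  · intro e he e' he' hc
    have hmem : ∀ x, x ∈ (C \ B) ∪ A → x ∈ C ∪ A := by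
      rintro x (⟨hx, -⟩ | hx)
      exacts [Or.inl hx, Or.inr hx]
    exact hcf e (hmem e he) e' (hmem e' he') hc
  · intro e hne heC'
    rw [residStep_carrier] at hne
    rw [residStep_carrier, residStep_F]
    by_cases hcar : e ∈ R'.carrier
    · have hAtCA : e ∈ R'.Att A ∪ R'.CAset A := by
        by_contra hn
        exact hne ⟨hcar, hn⟩
      rcases hAtCA with hAt | hCA
      · constructor
        · intro y hy hc
          have hyCA : y ∈ R'.CAset A :=
            ⟨hy.1, e, hAt, (hI.conf_iff y e).mpr ⟨h.conf_symm e y hc, hy.1, hcar⟩⟩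
          exact hy.2 (Or.inr hyCA)
        · intro u hu hp
          have hp' : R'.prev e u := (hI.prev_iff e u).mpr ⟨hp, hcar, hu.1.1⟩
          exact hu.2 (Or.inr ⟨hu.1.1, e, hAt, hp'⟩)
      · exact (hCAC' e hCA heC').elim
    · have heC : e ∈ C := by
        rcases heC' with ⟨hC, -⟩ | hA
        · exact hC
        · exact absurd (hAsub hA) hcar
      obtain ⟨h1, h2⟩ := hI.remIn e hcar heC
      exact ⟨fun y hy => h1 y hy.1, fun u hu => h2 u hu.1.1⟩
  · intro e hecar hne hneC'
    rw [residStep_carrier] at hne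
    rw [residStep_carrier, residStep_F]
    by_cases hcar : e ∈ R'.carrier
    · have hAtCA : e ∈ R'.Att A ∪ R'.CAset A := by
        by_contra hn
        exact hne ⟨hcar, hn⟩
      rcases hAtCA with hAt | hCA
      · exact (hneC' (hAtC' hAt)).elim
      · obtain ⟨-, a, hat, hconf⟩ := id hCA
        have hconfR1 : R.conf e a := hconfR e a hconf
        refine ⟨⟨a, hAtC' hat, hconfR1, fun hm => hm.2 (Or.inl hat)⟩, ?_, ?_⟩
        · intro b hb hlt
          have hsc := hcr e b hlt
          have hconf2 : R.conf a b := h.conf_hered_sc a e b (h.conf_symm e a hconfR1) hsc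
          have hbCA : b ∈ R'.CAset A :=
            ⟨hb.1, a, hat, (hI.conf_iff b a).mpr ⟨h.conf_symm a b hconf2, hb.1, hAtcar hat⟩⟩
          exact hb.2 (Or.inr hbCA)
        · intro u hu hr
          have hr' : R'.rc e u := (hI.rc_iff e u).mpr ⟨hr, hcar, hu.1.1⟩
          exact hu.2 (Or.inl ⟨hu.1.1, e, hCA, hr'⟩)
    · have hneC : e ∉ C := fun hC =>
        hneC' (Or.inl ⟨hC, fun hB => hcar (hBcar' hB)⟩)
      obtain ⟨⟨c, hcC, hconf, hcn⟩, h2, h3⟩ := hI.remOut e hecar hcar hneC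
      refine ⟨⟨c, Or.inl ⟨hcC, fun hB => hcn (hBcar' hB)⟩, hconf, fun hm => hcn hm.1⟩,
        fun b hb => h2 b hb.1, fun u hu => h3 u hu.1.1⟩
  · intro u huF hnu
    rw [residStep_F] at hnu
    rw [residStep_carrier]
    by_cases h1 : u ∈ R'.F
    · by_cases h2 : u ∈ R'.Ecar A
      · have hrem : u ∈ ({e | e ∈ R'.F ∧ ∃ a ∈ R'.CAset A, R'.rc a e} ∪
            {e | e ∈ R'.F ∧ ∃ a ∈ R'.Att A, R'.prev a e}) := by
          by_contra hn
          exact hnu ⟨⟨h1, h2⟩, hn⟩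
        rcases hrem with ⟨-, a, haCA, har⟩ | ⟨-, a, haAt, hap⟩
        · exact Or.inr (Or.inr ⟨a, ((hI.rc_iff a u).mp har).1, hCAC' a haCA,
            fun hm => hm.2 (Or.inr haCA)⟩)
        · exact Or.inr (Or.inl ⟨a, hAtC' haAt, ((hI.prev_iff a u).mp hap).1,
            fun hm => hm.2 (Or.inl haAt)⟩)
      · have hAtCA : u ∈ R'.Att A ∪ R'.CAset A := by
          by_contra hn
          exact h2 ⟨(hI.Fsub h1).2, hn⟩
        rcases hAtCA with hAt | hCA
        · rcases hAt with ⟨-, hnF⟩ | ⟨-, x, hx, hlt⟩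
          · exact (hnF h1).elim
          · have hltR : R.lt u x := ((hI.lt_iff u x).mp hlt).1
            have hprevR : R.prev x u := (hcr u x hltR).2 huF
            exact Or.inr (Or.inl ⟨x, Or.inr hx.1, hprevR,
              fun hm => hm.2 (Or.inl (Or.inl hx))⟩)
        · exact Or.inl ⟨hCAC' u hCA, fun hm => hm.2 (Or.inr hCA)⟩
    · rcases hI.remF u huF h1 with ⟨hnC, hncar⟩ | ⟨x, hxC, hxp, hxn⟩ | ⟨a, har, hanC, hancar⟩
      · refine Or.inl ⟨?_, fun hm => hncar hm.1⟩
        rintro (⟨hC, -⟩ | hA)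
        · exact hnC hC
        · exact hncar (hAsub hA)
      · exact Or.inr (Or.inl ⟨x, Or.inl ⟨hxC, fun hB => hxn (hBcar' hB)⟩, hxp,
          fun hm => hxn hm.1⟩)
      · refine Or.inr (Or.inr ⟨a, har, ?_, fun hm => hancar hm.1⟩)
        rintro (⟨hC, -⟩ | hA)
        · exact hanC hC
        · exact hancar (hAsub hA)

/-! ### Traces -/

lemma isTraceFrom_append {R : RPESData E L} {C C' : Set E} {t : List (Set E × Set E)}
    {p : Set E × Set E} (ht : R.IsTraceFrom C t C') (he : R.Enabled C' p.1 p.2) :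
    R.IsTraceFrom C (t ++ [p]) ((C' \ p.2) ∪ p.1) := by
  induction t generalizing C with
  | nil =>
    have hC : C' = C := ht
    subst hC
    exact ⟨he, rfl⟩
  | cons q t ih =>
    obtain ⟨h1, h2⟩ := ht
    exact ⟨h1, ih h2⟩

lemma resid_append (R : RPESData E L) (t : List (Set E × Set E)) (p : Set E × Set E) :
    R.resid (t ++ [p]) = (R.resid t).residStep p.1 p.2 := by
  simp [resid, List.foldl_append]

lemma reach_aux {R : RPESData E L} (h : R.IsRPES) (hcr : R.CauseRespecting) :
    ∀ (t : List (Set E × Set E)) (C Cend : Set E) (R' : RPESData E L),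
      R.Inv C R' → R.ReachRes R' → R.IsTraceFrom C t Cend →
      R.ReachRes (t.foldl (fun S p => S.residStep p.1 p.2) R') ∧
        R.Inv Cend (t.foldl (fun S p => S.residStep p.1 p.2) R') := by
  intro t
  induction t with
  | nil =>
    intro C Cend R' hI hre ht
    have hC : Cend = C := ht
    subst hC
    exact ⟨hre, hI⟩
  | cons p t ih =>
    intro C Cend R' hI hre ht
    obtain ⟨hen, ht'⟩ := ht
    have hen' := (inv_enabled_iff h hI p.1 p.2).mp hen
    have hre2 : R.ReachRes (R'.residStep p.1 p.2) :=
      ReachRes.step R' (R'.stepLabel p.1 p.2) _ hre ⟨p.1, p.2, hen', rfl, rfl⟩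
    have hI2 := inv_step h hcr hI hen
    exact ih _ _ _ hI2 hre2 ht'

end RPESData

/-- (i) for every trace `t` of a cause-respecting RPES `R`, the
residual `R \ t` belongs to `Reach(R)`; (ii) for every `R' ∈ Reach(R)` there is
a trace `t` with `R' = R \ t`. -/
theorem resid_reach_correspondence {E L : Type} (R : RPESData E L)
    (h : R.IsRPES) (hcr : R.CauseRespecting) :
    (∀ t, R.IsTrace t → R.ReachRes (R.resid t)) ∧
    (∀ R', R.ReachRes R' → ∃ t, R.IsTrace t ∧ R' = R.resid t) := by
  constructor
  · rintro t ⟨C, ht⟩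
    exact (RPESData.reach_aux h hcr t R.C0 C R (RPESData.inv_init R h)
      RPESData.ReachRes.init ht).1
  · intro R' hre
    have main : ∃ t C, R.IsTraceTo t C ∧ R' = R.resid t ∧ R.Inv C R' := by
      induction hre with
      | init => exact ⟨[], R.C0, rfl, rfl, RPESData.inv_init R h⟩
      | step R1 M R2 hre1 htr ih =>
        obtain ⟨t, C, ht, hEq, hI⟩ := ih
        obtain ⟨A, B, hen', hR2, -⟩ := htr
        have hen : R.Enabled C A B := (RPESData.inv_enabled_iff h hI A B).mpr hen'
        refine ⟨t ++ [(A, B)], (C \ B) ∪ A, ?_, ?_, ?_⟩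
        · exact RPESData.isTraceFrom_append ht hen
        · rw [hR2, hEq, RPESData.resid_append]
        · rw [hR2]
          exact RPESData.inv_step h hcr hI hen
    obtain ⟨t, C, ht, hEq, -⟩ := main
    exact ⟨t, ⟨C, ht⟩, hEq⟩
end
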